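/- Let D ≡ 1 (mod 4) be square-free, and suppose μ, m satisfy μ² ≡ D (mod m) with m even and (D−μ²)/m = r odd (so 4 | m). Then in ℤ[√D], the product of ideals (m, μ + √D)·(2, 1 + √D) equals 2·(m/2, μ + √D). -/
import Mathlib

open Ideal

private lemma mem_span4 {R : Type*} [CommRing R] {w x y z e : R} (a b c d : R)
    (h : a * w + b * x + c * y + d * z = e) : e ∈ Ideal.span {w, x, y, z} := by
  have hw : w ∈ Ideal.span ({w, x, y, z} : Set R) := Ideal.subset_span (by simp)
  have hx : x ∈ Ideal.span ({w, x, y, z} : Set R) := Ideal.subset_span (by simp)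
  have hy : y ∈ Ideal.span ({w, x, y, z} : Set R) := Ideal.subset_span (by simp)
  have hz : z ∈ Ideal.span ({w, x, y, z} : Set R) := Ideal.subset_span (by simp)
  exact h ▸ add_mem (add_mem (add_mem (Ideal.mul_mem_left _ a hw) (Ideal.mul_mem_left _ b hx))
    (Ideal.mul_mem_left _ c hy)) (Ideal.mul_mem_left _ d hz)

/-- For `D` squarefree with `D ≡ 1 (mod 4)`, `μ² ≡ D (mod m)`, `m` even,
`(D−μ²)/m` odd, and `4 ∣ m`: in `ℤ[√D]`,
`(m, μ + √D)·(2, 1 + √D) = 2·(m/2, μ + √D)`. -/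
theorem stmt_15 (D : ℤ) (hsf : Squarefree D) (hD4 : D % 4 = 1)
    (μ m : ℤ) (hm : 0 < m) (hroot : m ∣ D - μ ^ 2)
    (hme : Even m) (hfo : Odd ((D - μ ^ 2) / m)) (h4 : 4 ∣ m) :
    Ideal.span {(m : Zsqrtd D), (μ : Zsqrtd D) + Zsqrtd.sqrtd} *
        Ideal.span {(2 : Zsqrtd D), 1 + Zsqrtd.sqrtd} =
      Ideal.span {(2 : Zsqrtd D)} *
        Ideal.span {((m / 2 : ℤ) : Zsqrtd D), (μ : Zsqrtd D) + Zsqrtd.sqrtd} := by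
  obtain ⟨r, hr⟩ := hroot
  obtain ⟨j, hj⟩ := h4
  have hrodd : Odd r := by
    rwa [hr, Int.mul_ediv_cancel_left _ hm.ne'] at hfo
  obtain ⟨s, hs⟩ := hrodd
  have hμodd : Odd μ := by
    rcases Int.even_or_odd μ with he | ho
    · exfalso
      have h1 : Even (μ ^ 2) := by rw [sq]; exact he.mul_right μ
      have h2 : Even (m * r) := hme.mul_right r
      obtain ⟨a, ha⟩ := h1
      obtain ⟨b, hb⟩ := h2
      omega
    · exact ho
  obtain ⟨t, ht⟩ := hμodd
  have hs' : r = 2 * s + 1 := by omega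
  subst hs' ht hj
  have hD : D = (2 * t + 1) ^ 2 + (4 * j) * (2 * s + 1) := by
    have := hr; nlinarith [hr]
  have hm2 : (4 * j / 2 : ℤ) = 2 * j := by omega
  have hD2 : (Zsqrtd.sqrtd : Zsqrtd D) * Zsqrtd.sqrtd
      = (((2 * t + 1) ^ 2 + (4 * j) * (2 * s + 1) : ℤ) : Zsqrtd D) := by
    rw [Zsqrtd.dmuld]; exact congrArg (fun z : ℤ => (z : Zsqrtd D)) hD
  push_cast at hD2
  rw [hm2, Ideal.span_pair_mul_span_pair,
    show Ideal.span {(2 : Zsqrtd D)} *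
        Ideal.span {((2 * j : ℤ) : Zsqrtd D), ((2 * t + 1 : ℤ) : Zsqrtd D) + Zsqrtd.sqrtd}
      = Ideal.span {2 * ((2 * j : ℤ) : Zsqrtd D), 2 * (((2 * t + 1 : ℤ) : Zsqrtd D) + Zsqrtd.sqrtd)}
      from by
        rw [Ideal.span_insert, Ideal.mul_sup, Ideal.span_singleton_mul_span_singleton,
          Ideal.span_singleton_mul_span_singleton, ← Ideal.span_insert]]
  apply le_antisymm <;> rw [Ideal.span_le] <;> intro x hx <;>
    simp only [Set.mem_insert_iff, Set.mem_singleton_iff] at hx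
  · rcases hx with h | h | h | h <;> subst h <;> rw [SetLike.mem_coe, Ideal.mem_span_pair]
    · exact ⟨2, 0, by push_cast; ring⟩
    · exact ⟨((-2 * t : ℤ) : Zsqrtd D), ((2 * j : ℤ) : Zsqrtd D), by push_cast; ring⟩
    · exact ⟨0, 1, by push_cast; ring⟩
    · exact ⟨((2 * s + 1 : ℤ) : Zsqrtd D), ((t + 1 : ℤ) : Zsqrtd D), by
        push_cast; linear_combination -hD2⟩
  · rcases hx with h | h <;> subst h <;> rw [SetLike.mem_coe]
    · exact mem_span4 (-(s : Zsqrtd D)) 0 (-((t : Zsqrtd D) + 1)) 1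
        (by push_cast; linear_combination hD2)
    · exact mem_span4 0 0 1 0 (by push_cast; ring)
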